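/- Let p ∈ (1,2) and define f(x) = 1 + p·x + 2^{2-p}·x^p − (1+x)^p for x > 0. Then f(x) > 0 for all x > 0. -/
import Mathlib

open Real Set

private lemma real_rpow_add_le (a b q : ℝ) (ha : 0 ≤ a) (hb : 0 ≤ b) (hq : 0 ≤ q)
    (hq1 : q ≤ 1) : (a + b) ^ q ≤ a ^ q + b ^ q := by
  have h := NNReal.rpow_add_le_add_rpow (a.toNNReal) (b.toNNReal) hq hq1
  have := NNReal.coe_le_coe.2 h
  push_cast at this
  rwa [Real.coe_toNNReal _ ha, Real.coe_toNNReal _ hb] at this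

private lemma key_ineq (p : ℝ) (hp1 : 1 < p) (hp2 : p < 2) (x : ℝ) (hx : 0 ≤ x) :
    (1 + x) ^ p ≤ 1 + p * x + x ^ p := by
  set f : ℝ → ℝ := fun y => 1 + p * y + y ^ p - (1 + y) ^ p with hf
  have hmono : MonotoneOn f (Ici (0 : ℝ)) := by
    have hcont : ContinuousOn f (Ici 0) := by
      apply ContinuousOn.sub
      · apply ContinuousOn.add
        · exact (continuousOn_const.add (continuousOn_const.mul continuousOn_id))
        · intro y hy
          exact (Real.continuousAt_rpow_const y p (Or.inr (by linarith))).continuousWithinAt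
      · intro y hy
        exact ((Real.continuousAt_rpow_const (1 + y) p (Or.inr (by linarith))).comp
          (by continuity : Continuous fun y : ℝ => 1 + y).continuousAt).continuousWithinAt
    have hderiv : ∀ y ∈ interior (Ici (0:ℝ)),
        HasDerivAt f (p + p * y ^ (p - 1) - (1 * p * (1 + y) ^ (p - 1))) y := by
      intro y hy
      rw [interior_Ici] at hy
      have hy0 : (0:ℝ) < y := hy
      have h1 : HasDerivAt (fun y : ℝ => 1 + p * y) p y := by
        simpa using ((hasDerivAt_id y).const_mul p).const_add 1
      have h2 : HasDerivAt (fun y : ℝ => y ^ p) (p * y ^ (p - 1)) y :=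
        Real.hasDerivAt_rpow_const (Or.inl hy0.ne')
      have h3 : HasDerivAt (fun y : ℝ => (1 + y) ^ p) (1 * p * (1 + y) ^ (p - 1)) y := by
        have hb : HasDerivAt (fun y : ℝ => 1 + y) 1 y := (hasDerivAt_id y).const_add 1
        exact hb.rpow_const (Or.inl (by positivity))
      exact (h1.add h2).sub h3
    apply monotoneOn_of_deriv_nonneg (convex_Ici 0) hcont
    · intro y hy
      exact ((hderiv y hy).differentiableAt).differentiableWithinAt
    · intro y hy
      rw [(hderiv y hy).deriv]
      rw [interior_Ici] at hy
      have hy0 : (0:ℝ) < y := hy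
      have hsub : (1 + y) ^ (p - 1) ≤ 1 + y ^ (p - 1) := by
        have := real_rpow_add_le 1 y (p - 1) zero_le_one hy0.le (by linarith) (by linarith)
        rwa [Real.one_rpow] at this
      have hp0 : (0:ℝ) < p := by linarith
      nlinarith [Real.rpow_nonneg hy0.le (p - 1)]
  have h0 : f 0 = 0 := by
    simp [hf, Real.zero_rpow (by positivity : p ≠ 0), Real.one_rpow]
  have := hmono (self_mem_Ici) (mem_Ici.2 hx) hx
  rw [h0] at this
  simp only [hf] at this
  linarith

theorem caseA_pos (p : ℝ) (hp1 : 1 < p) (hp2 : p < 2) (x : ℝ) (hx : 0 < x) :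
    0 < 1 + p * x + (2 : ℝ) ^ (2 - p) * x ^ p - (1 + x) ^ p := by
  have hkey := key_ineq p hp1 hp2 x hx.le
  have h2 : (1:ℝ) < (2 : ℝ) ^ (2 - p) :=
    Real.one_lt_rpow_iff_of_pos (by norm_num) |>.2 (Or.inl ⟨by norm_num, by linarith⟩)
  have hxp : 0 < x ^ p := Real.rpow_pos_of_pos hx p
  nlinarith
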